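/- For each positive integer p and every x > 0, ψ_p(x) < ln(px/(x+p+1)), i.e., ln(px/(x+p+1)) − ψ_p(x) > 0. -/

import Mathlib

open Real Finset

noncomputable def pPsi (p : ℕ) (x : ℝ) : ℝ :=
  Real.log p - ∑ k ∈ Finset.range (p + 1), 1 / (x + k)

theorem pPsi_lt_log (p : ℕ) (hp : 1 ≤ p) (x : ℝ) (hx : 0 < x) :
    pPsi p x < Real.log ((p : ℝ) * x / (x + p + 1)) := by
  have hp0 : (0:ℝ) < p := by exact_mod_cast hp
  have hxp1 : (0:ℝ) < x + p + 1 := by positivity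
  have hpos : ∀ k : ℕ, (0:ℝ) < x + k := fun k => by positivity
  -- key: log(x+p+1) - log x < sum
  have key : Real.log (x + (p+1 : ℕ)) - Real.log x <
      ∑ k ∈ Finset.range (p + 1), 1 / (x + k) := by
    have tel : ∑ k ∈ Finset.range (p + 1),
        (Real.log (x + (k+1 : ℕ)) - Real.log (x + (k : ℕ)))
        = Real.log (x + (p+1 : ℕ)) - Real.log x := by
      rw [Finset.sum_range_sub (fun k => Real.log (x + (k : ℕ)))]
      norm_num
    rw [← tel]
    apply Finset.sum_lt_sum_of_nonempty (by simp)
    intro k _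
    have hk : (0:ℝ) < x + k := hpos k
    have hy : (0:ℝ) < (x + (k+1:ℕ)) / (x + k) := by
      push_cast; positivity
    have hne : (x + (k+1:ℕ)) / (x + (k:ℕ)) ≠ 1 := by
      have : (x + (k:ℝ)) < x + (k+1:ℝ) := by linarith
      push_cast
      intro h
      rw [div_eq_one_iff_eq (by positivity)] at h
      linarith
    have := Real.log_lt_sub_one_of_pos hy hne
    rw [Real.log_div (by push_cast; positivity) (ne_of_gt hk)] at this
    have h2 : (x + (k+1:ℕ)) / (x + (k:ℕ)) - 1 = 1 / (x + k) := by
      push_cast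
      field_simp
      ring
    linarith [this, h2 ▸ this]
  have hlog : Real.log ((p : ℝ) * x / (x + p + 1))
      = Real.log p + Real.log x - Real.log (x + p + 1) := by
    rw [Real.log_div (by positivity) (ne_of_gt hxp1),
      Real.log_mul (ne_of_gt hp0) (ne_of_gt hx)]
  have hcast : Real.log (x + (p+1 : ℕ)) = Real.log (x + p + 1) := by
    push_cast; ring_nf
  rw [pPsi, hlog]
  rw [hcast] at key
  linarith
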